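/- For every natural number n there exist 2^n + 1 linear subspaces L_0, …, L_{2^n} of (ZMod 2)^{2n}, each of dimension n, each totally isotropic with respect to the symplectic form ω((x,z),(x',z')) = x·z' + z·x' (i.e., ω vanishes on each L_i × L_i), such that L_i ∩ L_j = {0} for all i ≠ j. Consequently the nonzero vectors of the L_i partition (ZMod 2)^{2n} \ {0} into 2^n + 1 sets of size 2^n − 1. -/

import Mathlib

open Module

theorem exists_isotropic_cover (n : ℕ) :
    ∃ L : Fin (2 ^ n + 1) →
        Submodule (ZMod 2) ((Fin n → ZMod 2) × (Fin n → ZMod 2)),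
      (∀ i, Module.finrank (ZMod 2) (L i) = n) ∧
      (∀ i, ∀ u ∈ L i, ∀ w ∈ L i,
        ∑ k, u.1 k * w.2 k + ∑ k, u.2 k * w.1 k = 0) ∧
      (∀ i j, i ≠ j → L i ⊓ L j = ⊥) ∧
      (∀ v : (Fin n → ZMod 2) × (Fin n → ZMod 2), v ≠ 0 → ∃ i, v ∈ L i) := by
  rcases eq_or_ne n 0 with hn | hn
  · subst hn
    refine ⟨fun _ => ⊥, by simp, by simp, by simp, fun v hv => ?_⟩
    exact absurd (Subsingleton.elim v 0) hv
  -- main case: use the Galois field F = GF(2^n)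
  set F := GaloisField 2 n with hF
  have hfr : Module.finrank (ZMod 2) F = n := GaloisField.finrank 2 hn
  -- a basis and its trace-dual basis
  let e : Basis (Fin n) (ZMod 2) F := Module.finBasisOfFinrankEq (ZMod 2) F hfr
  let B : LinearMap.BilinForm (ZMod 2) F := Algebra.traceForm (ZMod 2) F
  have hB : B.Nondegenerate := traceForm_nondegenerate (ZMod 2) F
  let f : Basis (Fin n) (ZMod 2) F := B.dualBasis hB e
  -- key computation: the dot product of coordinates is the trace of the product
  have key : ∀ x z : F, ∑ k, e.equivFun x k * f.equivFun z k
      = Algebra.trace (ZMod 2) F (z * x) := by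
    intro x z
    have hf : ∀ k, f.equivFun z k = Algebra.trace (ZMod 2) F (z * e k) := by
      intro k
      simp only [f, Basis.equivFun_apply, LinearMap.BilinForm.dualBasis_repr_apply]
      exact Algebra.traceForm_apply (ZMod 2) z (e k)
    let g : F →ₗ[ZMod 2] ZMod 2 :=
      (Algebra.trace (ZMod 2) F).comp (LinearMap.mulLeft (ZMod 2) z)
    have hg : ∀ y, g y = Algebra.trace (ZMod 2) F (z * y) := fun y => rfl
    calc ∑ k, e.equivFun x k * f.equivFun z k
        = ∑ k, g (e.equivFun x k • e k) := by
          refine Finset.sum_congr rfl fun k _ => ?_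
          rw [map_smul, hf k, smul_eq_mul, hg]
      _ = g (∑ k, e.equivFun x k • e k) := (map_sum g _ _).symm
      _ = Algebra.trace (ZMod 2) F (z * x) := by rw [e.sum_equivFun x, hg]
  -- the subspaces inside F × F
  let Msub : Option F → Submodule (ZMod 2) (F × F) := fun o =>
    match o with
    | none => LinearMap.range ((0 : F →ₗ[ZMod 2] F).prod LinearMap.id)
    | some a => LinearMap.range
        ((LinearMap.id : F →ₗ[ZMod 2] F).prod (LinearMap.mulLeft (ZMod 2) a))
  have mem_some : ∀ (a : F) (p : F × F), p ∈ Msub (some a) ↔ p.2 = a * p.1 := by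
    intro a p
    constructor
    · rintro ⟨x, rfl⟩; simp [LinearMap.prod_apply]
    · intro h
      exact ⟨p.1, by simp [LinearMap.prod_apply, ← h]⟩
  have mem_none : ∀ p : F × F, p ∈ Msub none ↔ p.1 = 0 := by
    intro p
    constructor
    · rintro ⟨x, rfl⟩; simp [LinearMap.prod_apply]
    · intro h
      exact ⟨p.2, by simp [LinearMap.prod_apply, Prod.ext_iff, h.symm]⟩
  -- each Msub has rank n
  have hrank : ∀ o, Module.finrank (ZMod 2) (Msub o) = n := by
    intro o
    match o with
    | none =>
      have hinj : Function.Injective ((0 : F →ₗ[ZMod 2] F).prod LinearMap.id) := by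
        intro x y h
        have := congrArg Prod.snd h
        simpa using this
      rw [show Msub none = LinearMap.range ((0 : F →ₗ[ZMod 2] F).prod LinearMap.id) from rfl,
        LinearMap.finrank_range_of_inj hinj, hfr]
    | some a =>
      have hinj : Function.Injective
          ((LinearMap.id : F →ₗ[ZMod 2] F).prod (LinearMap.mulLeft (ZMod 2) a)) := by
        intro x y h
        have := congrArg Prod.fst h
        simpa using this
      rw [show Msub (some a) = LinearMap.range
          ((LinearMap.id : F →ₗ[ZMod 2] F).prod (LinearMap.mulLeft (ZMod 2) a)) from rfl,
        LinearMap.finrank_range_of_inj hinj, hfr]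
  -- pairwise trivial intersections
  have hinf : ∀ o o' : Option F, o ≠ o' → Msub o ⊓ Msub o' = ⊥ := by
    intro o o' hne
    rw [eq_bot_iff]
    rintro p ⟨hp, hp'⟩
    match o, o' with
    | none, none => exact absurd rfl hne
    | none, some a =>
      have h1 : p.1 = 0 := (mem_none p).1 hp
      have h2 : p.2 = a * p.1 := (mem_some a p).1 hp'
      have : p = 0 := Prod.ext h1 (by simp [h2, h1])
      simp [this]
    | some a, none =>
      have h1 : p.1 = 0 := (mem_none p).1 hp'
      have h2 : p.2 = a * p.1 := (mem_some a p).1 hp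
      have : p = 0 := Prod.ext h1 (by simp [h2, h1])
      simp [this]
    | some a, some b =>
      have hab : a ≠ b := fun h => hne (by rw [h])
      have h1 : p.2 = a * p.1 := (mem_some a p).1 hp
      have h2 : p.2 = b * p.1 := (mem_some b p).1 hp'
      have h3 : (a - b) * p.1 = 0 := by rw [sub_mul, ← h1, ← h2, sub_self]
      have h4 : p.1 = 0 := by
        rcases mul_eq_zero.1 h3 with h | h
        · exact absurd (sub_eq_zero.1 h) hab
        · exact h
      have : p = 0 := Prod.ext h4 (by simp [h1, h4])
      simp [this]
  -- the linear equivalence to coordinates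
  let Φ : (F × F) ≃ₗ[ZMod 2] (Fin n → ZMod 2) × (Fin n → ZMod 2) :=
    LinearEquiv.prodCongr e.equivFun f.equivFun
  -- indexing
  haveI : Fintype F := Fintype.ofFinite F
  have hcardF : Fintype.card F = 2 ^ n := by
    rw [← Nat.card_eq_fintype_card]
    exact GaloisField.card 2 n hn
  have hcard : Fintype.card (Option F) = Fintype.card (Fin (2 ^ n + 1)) := by
    simp [hcardF]
  let σ : Fin (2 ^ n + 1) ≃ Option F := (Fintype.equivOfCardEq hcard).symm
  refine ⟨fun i => (Msub (σ i)).map (Φ : (F × F) →ₗ[ZMod 2] _), ?_, ?_, ?_, ?_⟩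
  · intro i
    rw [LinearEquiv.finrank_map_eq Φ]
    exact hrank (σ i)
  · -- isotropy
    intro i u hu w hw
    rw [Submodule.mem_map_equiv] at hu hw
    set p := Φ.symm u with hp
    set q := Φ.symm w with hq
    have hu1 : u = Φ p := (Φ.apply_symm_apply u).symm
    have hw1 : w = Φ q := (Φ.apply_symm_apply w).symm
    have hΦ : ∀ r : F × F, (Φ r).1 = e.equivFun r.1 ∧ (Φ r).2 = f.equivFun r.2 :=
      fun r => ⟨rfl, rfl⟩
    have hsum1 : ∑ k, u.1 k * w.2 k = Algebra.trace (ZMod 2) F (q.2 * p.1) := by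
      rw [hu1, hw1]; exact key p.1 q.2
    have hsum2 : ∑ k, u.2 k * w.1 k = Algebra.trace (ZMod 2) F (p.2 * q.1) := by
      rw [hu1, hw1]
      calc ∑ k, f.equivFun p.2 k * e.equivFun q.1 k
          = ∑ k, e.equivFun q.1 k * f.equivFun p.2 k := by
            refine Finset.sum_congr rfl fun k _ => mul_comm _ _
        _ = Algebra.trace (ZMod 2) F (p.2 * q.1) := key q.1 p.2
    rw [hsum1, hsum2]
    match ho : σ i with
    | none =>
      rw [ho] at hu hw
      have h1 : p.1 = 0 := (mem_none p).1 hu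
      have h2 : q.1 = 0 := (mem_none q).1 hw
      rw [h1, h2, mul_zero, mul_zero, map_zero, add_zero]
    | some a =>
      rw [ho] at hu hw
      have h1 : p.2 = a * p.1 := (mem_some a p).1 hu
      have h2 : q.2 = a * q.1 := (mem_some a q).1 hw
      have : q.2 * p.1 = p.2 * q.1 := by rw [h1, h2]; ring
      rw [this, CharTwo.add_self_eq_zero]
  · -- trivial intersections
    intro i j hij
    dsimp only
    rw [← Submodule.map_inf (Φ : (F × F) →ₗ[ZMod 2] (Fin n → ZMod 2) × (Fin n → ZMod 2)) Φ.injective,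
      hinf (σ i) (σ j) (fun h => hij (σ.injective h)), Submodule.map_bot]
  · -- coverage
    intro v hv
    set p := Φ.symm v with hp
    have hpne : p ≠ 0 := fun h => hv (by
      have := congrArg Φ h
      rwa [Φ.apply_symm_apply, map_zero] at this)
    by_cases h1 : p.1 = 0
    · refine ⟨σ.symm none, ?_⟩
      rw [Submodule.mem_map_equiv, σ.apply_symm_apply]
      exact (mem_none p).2 h1
    · refine ⟨σ.symm (some (p.2 * p.1⁻¹)), ?_⟩
      rw [Submodule.mem_map_equiv, σ.apply_symm_apply]
      refine (mem_some _ p).2 ?_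
      exact (inv_mul_cancel_right₀ h1 _).symm
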